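/- arXiv:0707.1722 — 3 statements merged into one kernel-verified Lean document; each statement's English description precedes it below -/
import Mathlib

section
/- For any unit vector ψ ∈ ℂ^d, Tr(W_{λ,d}(|ψ⟩⟨ψ|)²) = λ² + (2λ(1-λ)/(d-1))(1 - |⟨ψ|ψ̄⟩|²) + (1-λ)²/(d-1), where ψ̄ is the entrywise complex conjugate of ψ in the standard basis. -/
open Matrix Finset Kronecker

noncomputable section

/-- Outer product |ψ⟩⟨ψ|. -/
def outer {n : Type*} [Fintype n] (ψ : n → ℂ) : Matrix n n ℂ :=
  fun i j => ψ i * star (ψ j)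

/-- Outer product |φ⟩⟨χ|. -/
def outerLR {n : Type*} [Fintype n] (φ χ : n → ℂ) : Matrix n n ℂ :=
  fun i j => φ i * star (χ j)

/-- Inner product ⟨φ|χ⟩ (conjugate-linear in the first argument). -/
def cinner {n : Type*} [Fintype n] (φ χ : n → ℂ) : ℂ := ∑ i, star (φ i) * χ i

/-- Entrywise complex conjugate of a vector. -/
def conjVec {n : Type*} (ψ : n → ℂ) : n → ℂ := fun i => star (ψ i)

/-- Depolarized Werner–Holevo channel W_{λ,d}(ρ) = λρ + (1-λ)(Tr(ρ)·1 - ρᵀ)/(d-1). -/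
def WH (d : ℕ) (lam : ℝ) (ρ : Matrix (Fin d) (Fin d) ℂ) : Matrix (Fin d) (Fin d) ℂ :=
  (lam : ℂ) • ρ +
    (((1 - lam : ℝ) : ℂ) * ((d : ℂ) - 1)⁻¹) •
      (ρ.trace • (1 : Matrix (Fin d) (Fin d) ℂ) - ρ.transpose)

/-- Tensor product Φ₁ ⊗ Φ₂ of two linear maps on d×d matrices, acting on d²×d² matrices. -/
def tensorMap {d : ℕ}
    (Φ₁ Φ₂ : Matrix (Fin d) (Fin d) ℂ → Matrix (Fin d) (Fin d) ℂ)
    (M : Matrix (Fin d × Fin d) (Fin d × Fin d) ℂ) :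
    Matrix (Fin d × Fin d) (Fin d × Fin d) ℂ :=
  fun p q => ∑ i, ∑ j, ∑ k, ∑ l,
    M (i, k) (j, l) * (Φ₁ (Matrix.single i j 1)) p.1 q.1 *
      (Φ₂ (Matrix.single k l 1)) p.2 q.2

/-- Partial trace over the first tensor factor. -/
def ptr1 {d : ℕ} (M : Matrix (Fin d × Fin d) (Fin d × Fin d) ℂ) : Matrix (Fin d) (Fin d) ℂ :=
  fun i j => ∑ k, M (k, i) (k, j)

/-- Partial trace over the second tensor factor. -/
def ptr2 {d : ℕ} (M : Matrix (Fin d × Fin d) (Fin d × Fin d) ℂ) : Matrix (Fin d) (Fin d) ℂ :=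
  fun i j => ∑ k, M (i, k) (j, k)

/-- Partial transpose on the first tensor factor. -/
def pt1 {d : ℕ} (M : Matrix (Fin d × Fin d) (Fin d × Fin d) ℂ) :
    Matrix (Fin d × Fin d) (Fin d × Fin d) ℂ :=
  fun p q => M (q.1, p.2) (p.1, q.2)

/-- Partial transpose on the second tensor factor. -/
def pt2 {d : ℕ} (M : Matrix (Fin d × Fin d) (Fin d × Fin d) ℂ) :
    Matrix (Fin d × Fin d) (Fin d × Fin d) ℂ :=
  fun p q => M (p.1, q.2) (q.1, p.2)


section Aux

variable {d : ℕ} (ψ : Fin d → ℂ)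

lemma trace_outer : (outer ψ).trace = cinner ψ ψ := by
  simp [outer, Matrix.trace, Matrix.diag, cinner, mul_comm]

lemma trace_outer_mul_outer :
    (outer ψ * outer ψ).trace = cinner ψ ψ * cinner ψ ψ := by
  have : (outer ψ * outer ψ).trace
      = (∑ i, star (ψ i) * ψ i) * (∑ k, star (ψ k) * ψ k) := by
    simp only [outer, Matrix.trace, Matrix.diag, Matrix.mul_apply]
    rw [Finset.sum_mul_sum]
    refine Finset.sum_congr rfl fun i _ => Finset.sum_congr rfl fun k _ => ?_
    ring
  rw [this, cinner]

lemma trace_outer_mul_transpose :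
    (outer ψ * (outer ψ)ᵀ).trace
      = (starRingEnd ℂ) (cinner ψ (conjVec ψ)) * cinner ψ (conjVec ψ) := by
  have : (outer ψ * (outer ψ)ᵀ).trace
      = (∑ i, ψ i * ψ i) * (∑ k, star (ψ k) * star (ψ k)) := by
    simp only [outer, Matrix.trace, Matrix.diag, Matrix.mul_apply, Matrix.transpose_apply]
    rw [Finset.sum_mul_sum]
    refine Finset.sum_congr rfl fun i _ => Finset.sum_congr rfl fun k _ => ?_
    ring
  rw [this, cinner]
  simp only [conjVec, map_sum, _root_.map_mul, Complex.conj_conj, RingHomCompTriple.comp_apply]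
  simp [mul_comm]

end Aux

theorem WH_single_output_two_norm (d : ℕ) (hd : 2 ≤ d) (lam : ℝ)
    (hlam : lam ∈ Set.Icc (0 : ℝ) 1) (ψ : Fin d → ℂ) (hψ : cinner ψ ψ = 1) :
    (WH d lam (outer ψ) * WH d lam (outer ψ)).trace =
      ((lam ^ 2 + 2 * lam * (1 - lam) / ((d : ℝ) - 1) * (1 - ‖cinner ψ (conjVec ψ)‖ ^ 2)
        + (1 - lam) ^ 2 / ((d : ℝ) - 1) : ℝ) : ℂ) := by
  set ρ := outer ψ with hρ
  have htrρ : ρ.trace = 1 := by rw [hρ, trace_outer, hψ]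
  have hd1C : ((d : ℂ) - 1) ≠ 0 := by
    rw [sub_ne_zero]
    exact_mod_cast (show d ≠ 1 by omega)
  have hd1R : ((d : ℝ) - 1) ≠ 0 := by
    rw [sub_ne_zero]
    exact_mod_cast (show d ≠ 1 by omega)
  set t : ℂ := cinner ψ (conjVec ψ) with ht
  set a : ℂ := (lam : ℂ) with ha
  set c : ℂ := ((1 - lam : ℝ) : ℂ) * ((d : ℂ) - 1)⁻¹ with hc
  have T1 : (ρ * ρ).trace = 1 := by rw [hρ, trace_outer_mul_outer, hψ, one_mul]
  have T2 : (ρ * ρᵀ).trace = ((‖t‖ ^ 2 : ℝ) : ℂ) := by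
    rw [hρ, trace_outer_mul_transpose, ← ht, Complex.conj_mul']
    push_cast
    ring
  have T3 : (ρᵀ * ρ).trace = ((‖t‖ ^ 2 : ℝ) : ℂ) := by
    rw [Matrix.trace_mul_comm, T2]
  have T4 : (ρᵀ * ρᵀ).trace = 1 := by
    rw [← Matrix.transpose_mul, Matrix.trace_transpose, T1]
  have T5 : (ρᵀ).trace = 1 := by rw [Matrix.trace_transpose, htrρ]
  have expand : WH d lam ρ = a • ρ + c • ((1 : Matrix (Fin d) (Fin d) ℂ) - ρᵀ) := by
    rw [WH, htrρ, one_smul]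
  rw [expand]
  simp only [Matrix.add_mul, Matrix.mul_add, Matrix.smul_mul, Matrix.mul_smul,
    Matrix.sub_mul, Matrix.mul_sub, Matrix.trace_add, Matrix.trace_smul, Matrix.trace_sub,
    Matrix.one_mul, Matrix.mul_one, T1, T2, T3, T4, T5, htrρ, Matrix.trace_one,
    smul_eq_mul, smul_sub, smul_smul, Fintype.card_fin]
  rw [ha, hc]
  push_cast
  field_simp
  ring
end
end

section
/- For any unit vector ψ₁₂ ∈ ℂ^d ⊗ ℂ^d with d ≥ 2, and ρ₁ = Tr₂|ψ₁₂⟩⟨ψ₁₂|, ρ₂ = Tr₁|ψ₁₂⟩⟨ψ₁₂|, the inequality |⟨ψ₁₂|ψ̄₁₂⟩|² ≤ 2(1 − Tr(ρ₁²)) + (1 + √(d-1))·Tr(ρ₁ρ₁^T + ρ₂ρ₂^T) holds. -/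
open Matrix Finset Kronecker

noncomputable section

-- ##################### auxiliary lemmas #####################

lemma scalar_core' (A B C E p q R : ℝ) (hA : 0 ≤ A) (hB : 0 ≤ B) (hC : 0 ≤ C) (hE : 0 ≤ E)
    (hp : p ^ 2 ≤ A * B) (hq : q ^ 2 ≤ C * E)
    (hR : R ^ 2 ≤ (A * B - p ^ 2) * (C * E - q ^ 2)) :
    2 * (p * q + R) ≤ A * E + B * C := by
  have hα : 0 ≤ A * B - p ^ 2 := sub_nonneg.2 hp
  have hβ : 0 ≤ C * E - q ^ 2 := sub_nonneg.2 hq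
  have key : 2 * (p * q * R) ≤ q ^ 2 * (A * B - p ^ 2) + p ^ 2 * (C * E - q ^ 2) := by
    nlinarith [mul_le_mul_of_nonneg_left hR (sq_nonneg (p * q)),
      sq_nonneg (q ^ 2 * (A * B - p ^ 2) - p ^ 2 * (C * E - q ^ 2)),
      mul_nonneg (mul_nonneg (sq_nonneg q) hα) (mul_nonneg (sq_nonneg p) hβ),
      mul_nonneg (sq_nonneg q) hα, mul_nonneg (sq_nonneg p) hβ]
  have h1 : (p * q + R) ^ 2 ≤ (A * B) * (C * E) := by nlinarith [key, hR]
  have h2 : 0 ≤ A * E + B * C := by positivity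
  nlinarith [sq_nonneg (A * E - B * C), h1, h2]

lemma lagrange_mul' {ι : Type*} [Fintype ι] (a b c e : ι → ℝ) :
    ∑ k, ∑ l, (a k * b l - a l * b k) * (c k * e l - c l * e k) =
      2 * ((∑ k, a k * c k) * (∑ k, b k * e k) - (∑ k, a k * e k) * (∑ k, b k * c k)) := by
  have h : ∀ k : ι, (∑ l, (a k * b l - a l * b k) * (c k * e l - c l * e k)) =
      (a k * c k) * (∑ l, b l * e l) + (b k * e k) * (∑ l, a l * c l)
        - (a k * e k) * (∑ l, b l * c l) - (b k * c k) * (∑ l, a l * e l) := by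
    intro k
    rw [Finset.mul_sum, Finset.mul_sum, Finset.mul_sum, Finset.mul_sum,
      ← Finset.sum_add_distrib, ← Finset.sum_sub_distrib, ← Finset.sum_sub_distrib]
    exact Finset.sum_congr rfl fun l _ => by ring
  rw [Finset.sum_congr rfl fun k _ => h k]
  simp only [Finset.sum_sub_distrib, Finset.sum_add_distrib, ← Finset.sum_mul]
  ring

lemma complex_CS' {ι : Type*} [Fintype ι] (x y : ι → ℂ) :
    Complex.normSq (∑ k, x k * (starRingEnd ℂ) (y k)) ≤
      (∑ k, Complex.normSq (x k)) * (∑ k, Complex.normSq (y k)) := by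
  classical
  set X : EuclideanSpace ℂ ι := (WithLp.equiv 2 _).symm x
  set Y : EuclideanSpace ℂ ι := (WithLp.equiv 2 _).symm y
  have h := norm_inner_le_norm (𝕜 := ℂ) Y X
  have hip : inner ℂ Y X = ∑ k, x k * (starRingEnd ℂ) (y k) := by
    rw [PiLp.inner_apply]
    exact Finset.sum_congr rfl fun k _ => by simp [X, Y, mul_comm, RCLike.inner_apply]
  have hX : ‖X‖ ^ 2 = ∑ k, Complex.normSq (x k) := by
    rw [EuclideanSpace.norm_eq, Real.sq_sqrt (by positivity)]
    exact Finset.sum_congr rfl fun k _ => by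
      simp [X, Complex.sq_norm]
  have hY : ‖Y‖ ^ 2 = ∑ k, Complex.normSq (y k) := by
    rw [EuclideanSpace.norm_eq, Real.sq_sqrt (by positivity)]
    exact Finset.sum_congr rfl fun k _ => by
      simp [Y, Complex.sq_norm]
  have h2 : ‖inner (𝕜 := ℂ) Y X‖ ^ 2 ≤ (‖Y‖ * ‖X‖) ^ 2 := by
    nlinarith [h, norm_nonneg (inner (𝕜 := ℂ) Y X), norm_nonneg Y, norm_nonneg X]
  rw [hip] at h2
  calc Complex.normSq (∑ k, x k * (starRingEnd ℂ) (y k))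
      = ‖∑ k, x k * (starRingEnd ℂ) (y k)‖ ^ 2 := by
        rw [Complex.sq_norm]
    _ ≤ (‖Y‖ * ‖X‖) ^ 2 := h2
    _ = (∑ k, Complex.normSq (x k)) * (∑ k, Complex.normSq (y k)) := by
        rw [mul_pow, hX, hY]; ring

lemma F_nonneg' {ι : Type*} [Fintype ι] (x y : ι → ℂ) :
    ((∑ k, x k * x k) * (starRingEnd ℂ) (∑ k, y k * y k)).re
      + Complex.normSq (∑ k, x k * (starRingEnd ℂ) (y k))
    ≤ (∑ k, Complex.normSq (x k)) * (∑ k, Complex.normSq (y k))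
      + Complex.normSq (∑ k, x k * y k) := by
  classical
  let a : ι → ℝ := fun k => (x k).re
  let b : ι → ℝ := fun k => (x k).im
  let c : ι → ℝ := fun k => (y k).re
  let e : ι → ℝ := fun k => (y k).im
  have hA : (0:ℝ) ≤ ∑ k, a k * a k := Finset.sum_nonneg fun k _ => mul_self_nonneg _
  have hB : (0:ℝ) ≤ ∑ k, b k * b k := Finset.sum_nonneg fun k _ => mul_self_nonneg _
  have hC : (0:ℝ) ≤ ∑ k, c k * c k := Finset.sum_nonneg fun k _ => mul_self_nonneg _
  have hE : (0:ℝ) ≤ ∑ k, e k * e k := Finset.sum_nonneg fun k _ => mul_self_nonneg _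
  have comm : ∀ u v : ι → ℝ, ∑ k, u k * v k = ∑ k, v k * u k :=
    fun u v => Finset.sum_congr rfl fun k _ => mul_comm _ _
  have hp : (∑ k, a k * b k) ^ 2 ≤ (∑ k, a k * a k) * (∑ k, b k * b k) := by
    have := Finset.sum_mul_sq_le_sq_mul_sq univ a b
    simpa only [pow_two] using this
  have hq : (∑ k, c k * e k) ^ 2 ≤ (∑ k, c k * c k) * (∑ k, e k * e k) := by
    have := Finset.sum_mul_sq_le_sq_mul_sq univ c e
    simpa only [pow_two] using this
  have hR : ((∑ k, a k * c k) * (∑ k, b k * e k) - (∑ k, a k * e k) * (∑ k, b k * c k)) ^ 2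
      ≤ ((∑ k, a k * a k) * (∑ k, b k * b k) - (∑ k, a k * b k) ^ 2)
        * ((∑ k, c k * c k) * (∑ k, e k * e k) - (∑ k, c k * e k) ^ 2) := by
    have hcs := Finset.sum_mul_sq_le_sq_mul_sq univ
      (fun p : ι × ι => a p.1 * b p.2 - a p.2 * b p.1)
      (fun p : ι × ι => c p.1 * e p.2 - c p.2 * e p.1)
    rw [Fintype.sum_prod_type, Fintype.sum_prod_type, Fintype.sum_prod_type] at hcs
    simp only [pow_two] at hcs
    rw [lagrange_mul' a b c e, lagrange_mul' a b a b, lagrange_mul' c e c e,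
      comm b a, comm e c] at hcs
    nlinarith [hcs]
  have H := scalar_core' (∑ k, a k * a k) (∑ k, b k * b k) (∑ k, c k * c k) (∑ k, e k * e k)
    (∑ k, a k * b k) (∑ k, c k * e k)
    ((∑ k, a k * c k) * (∑ k, b k * e k) - (∑ k, a k * e k) * (∑ k, b k * c k))
    hA hB hC hE hp hq hR
  simp only [Complex.normSq_apply, Complex.mul_re, Complex.mul_im, Complex.re_sum,
    Complex.im_sum, Complex.conj_re, Complex.conj_im, mul_neg, neg_mul,
    Finset.sum_sub_distrib, Finset.sum_add_distrib, Finset.sum_neg_distrib]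
  rw [comm (fun k => (x k).im) (fun k => (x k).re),
    comm (fun k => (y k).im) (fun k => (y k).re)]
  nlinarith [H]

lemma trace_quad {ι κ : Type*} [Fintype ι] [Fintype κ] (f : ι → κ → ℂ) :
    (∑ a : κ, ∑ b : κ, (∑ i, f i a * (starRingEnd ℂ) (f i b)) * (∑ j, f j a * (starRingEnd ℂ) (f j b)))
      = ∑ i, ∑ j, (Complex.normSq (∑ a, f i a * f j a) : ℂ) := by
  have lhs_eq : (∑ a : κ, ∑ b : κ, (∑ i, f i a * (starRingEnd ℂ) (f i b)) * (∑ j, f j a * (starRingEnd ℂ) (f j b)))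
      = ∑ p : κ × κ, ∑ q : ι × ι, (f q.1 p.1 * f q.2 p.1) * ((starRingEnd ℂ) (f q.1 p.2) * (starRingEnd ℂ) (f q.2 p.2)) := by
    rw [Fintype.sum_prod_type]
    refine Finset.sum_congr rfl fun a _ => Finset.sum_congr rfl fun b _ => ?_
    rw [Finset.sum_mul_sum, Fintype.sum_prod_type]
    exact Finset.sum_congr rfl fun i _ => Finset.sum_congr rfl fun j _ => by ring
  have rhs_eq : (∑ i, ∑ j, (Complex.normSq (∑ a, f i a * f j a) : ℂ))
      = ∑ q : ι × ι, ∑ p : κ × κ, (f q.1 p.1 * f q.2 p.1) * ((starRingEnd ℂ) (f q.1 p.2) * (starRingEnd ℂ) (f q.2 p.2)) := by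
    rw [Fintype.sum_prod_type]
    refine Finset.sum_congr rfl fun i _ => Finset.sum_congr rfl fun j _ => ?_
    rw [← Complex.mul_conj, map_sum, Finset.sum_mul_sum, Fintype.sum_prod_type]
    refine Finset.sum_congr rfl fun a _ => Finset.sum_congr rfl fun b _ => ?_
    rw [RingHom.map_mul]
  rw [lhs_eq, rhs_eq, Finset.sum_comm]


theorem key_multiplicativity_inequality (d : ℕ) (hd : 2 ≤ d)
    (ψ : Fin d × Fin d → ℂ) (hψ : cinner ψ ψ = 1) :
    ‖cinner ψ (conjVec ψ)‖ ^ 2 ≤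
      2 * (1 - (ptr2 (outer ψ) * ptr2 (outer ψ)).trace.re) +
        (1 + Real.sqrt ((d : ℝ) - 1)) *
          ((ptr2 (outer ψ) * (ptr2 (outer ψ))ᵀ).trace.re +
            (ptr1 (outer ψ) * (ptr1 (outer ψ))ᵀ).trace.re) := by
  classical
  set ρ : Fin d → Fin d → ℂ := fun i j => ∑ k, ψ (i,k) * (starRingEnd ℂ) (ψ (j,k)) with hρ
  set S : Fin d → Fin d → ℂ := fun i j => ∑ k, ψ (i,k) * ψ (j,k) with hS
  set N : Fin d → ℝ := fun i => ∑ k, Complex.normSq (ψ (i,k)) with hNdef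
  -- the normalization
  have hNsum : ∑ p : Fin d × Fin d, Complex.normSq (ψ p) = 1 := by
    have h0 : ∑ p : Fin d × Fin d, Complex.normSq (ψ p) = (cinner ψ ψ).re := by
      rw [cinner, Complex.re_sum]
      refine Finset.sum_congr rfl fun p _ => ?_
      simp [Complex.normSq_apply, Complex.mul_re, Complex.star_def]
    rw [h0, hψ, Complex.one_re]
  have hN1 : ∑ i, N i = 1 := by
    rw [hNdef, ← hNsum, ← Fintype.sum_prod_type (f := fun p => Complex.normSq (ψ p))]
  -- symmetry of ρ
  have hsym : ∀ i j, ρ j i = (starRingEnd ℂ) (ρ i j) := by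
    intro i j
    rw [hρ, map_sum]
    refine Finset.sum_congr rfl fun k _ => ?_
    rw [RingHom.map_mul, Complex.conj_conj]
    ring
  -- trace of ρ² in terms of normSq
  have hT1 : (ptr2 (outer ψ) * ptr2 (outer ψ)).trace.re = ∑ i, ∑ j, Complex.normSq (ρ i j) := by
    have e1 : (ptr2 (outer ψ) * ptr2 (outer ψ)).trace = ∑ i, ∑ j, ρ i j * ρ j i := by
      simp [Matrix.trace, Matrix.diag, Matrix.mul_apply, ptr2, outer, hρ, Complex.star_def]
    rw [e1]
    rw [Finset.sum_congr rfl fun i (_ : i ∈ univ) => Finset.sum_congr rfl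
      fun j (_ : j ∈ univ) => by rw [hsym i j, Complex.mul_conj]]
    rw [Complex.re_sum]
    refine Finset.sum_congr rfl fun i _ => ?_
    rw [Complex.re_sum]
    exact Finset.sum_congr rfl fun j _ => Complex.ofReal_re _
  have hT3 : (ptr1 (outer ψ) * (ptr1 (outer ψ))ᵀ).trace.re
      = ∑ i, ∑ j, Complex.normSq (S i j) := by
    have e1 : (ptr1 (outer ψ) * (ptr1 (outer ψ))ᵀ).trace
        = ∑ a, ∑ b, (∑ i, ψ (i,a) * (starRingEnd ℂ) (ψ (i,b))) *
            (∑ j, ψ (j,a) * (starRingEnd ℂ) (ψ (j,b))) := by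
      simp [Matrix.trace, Matrix.diag, Matrix.mul_apply, Matrix.transpose_apply, ptr1, outer,
        Complex.star_def]
    rw [e1, trace_quad (fun i a => ψ (i,a)), Complex.re_sum]
    refine Finset.sum_congr rfl fun i _ => ?_
    rw [Complex.re_sum]
    exact Finset.sum_congr rfl fun j _ => Complex.ofReal_re _
  have hT2 : (ptr2 (outer ψ) * (ptr2 (outer ψ))ᵀ).trace.re
      = ∑ i, ∑ j, Complex.normSq (∑ a, ψ (a,i) * ψ (a,j)) := by
    have e1 : (ptr2 (outer ψ) * (ptr2 (outer ψ))ᵀ).trace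
        = ∑ a, ∑ b, (∑ i, ψ (a,i) * (starRingEnd ℂ) (ψ (b,i))) *
            (∑ j, ψ (a,j) * (starRingEnd ℂ) (ψ (b,j))) := by
      simp [Matrix.trace, Matrix.diag, Matrix.mul_apply, Matrix.transpose_apply, ptr2, outer,
        Complex.star_def]
    rw [e1, trace_quad (fun i a => ψ (a,i)), Complex.re_sum]
    refine Finset.sum_congr rfl fun i _ => ?_
    rw [Complex.re_sum]
    exact Finset.sum_congr rfl fun j _ => Complex.ofReal_re _
  have hLHS : ‖cinner ψ (conjVec ψ)‖ ^ 2 = Complex.normSq (∑ i, S i i) := by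
    have e1 : cinner ψ (conjVec ψ) = (starRingEnd ℂ) (∑ i, S i i) := by
      rw [hS, cinner, map_sum]
      rw [show (∑ i : Fin d, (starRingEnd ℂ) (∑ k, ψ (i,k) * ψ (i,k)))
          = ∑ i : Fin d, ∑ k, (starRingEnd ℂ) (ψ (i,k) * ψ (i,k)) from
        Finset.sum_congr rfl fun i _ => map_sum _ _ _]
      rw [← Fintype.sum_prod_type (f := fun p => (starRingEnd ℂ) (ψ p * ψ p))]
      refine Finset.sum_congr rfl fun p _ => ?_
      simp [conjVec, Complex.star_def, RingHom.map_mul]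
    rw [e1, RCLike.norm_conj, Complex.sq_norm]
  -- pairwise F inequality summed over all pairs of rows
  have hF : ∀ i j : Fin d,
      (S i i * (starRingEnd ℂ) (S j j)).re + Complex.normSq (ρ i j)
        ≤ N i * N j + Complex.normSq (S i j) :=
    fun i j => F_nonneg' (fun k => ψ (i,k)) (fun k => ψ (j,k))
  have hFsum : (∑ i, ∑ j, ((S i i * (starRingEnd ℂ) (S j j)).re + Complex.normSq (ρ i j)))
      ≤ ∑ i, ∑ j, (N i * N j + Complex.normSq (S i j)) :=
    Finset.sum_le_sum fun i _ => Finset.sum_le_sum fun j _ => hF i j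
  have idL : Complex.normSq (∑ i, S i i) = ∑ i, ∑ j, (S i i * (starRingEnd ℂ) (S j j)).re := by
    have : (Complex.normSq (∑ i, S i i) : ℂ) = (∑ i, S i i) * (starRingEnd ℂ) (∑ j, S j j) :=
      (Complex.mul_conj _).symm
    have h2 := congrArg Complex.re this
    rw [Complex.ofReal_re] at h2
    rw [h2, map_sum, Finset.sum_mul_sum, Complex.re_sum]
    refine Finset.sum_congr rfl fun i _ => ?_
    rw [Complex.re_sum]
  have idN : (1:ℝ) = ∑ i, ∑ j, N i * N j := by
    rw [← Finset.sum_mul_sum, hN1, one_mul]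
  -- Cauchy-Schwarz: T1 ≤ 1
  have hCS : (∑ i, ∑ j, Complex.normSq (ρ i j)) ≤ 1 := by
    rw [idN]
    exact Finset.sum_le_sum fun i _ => Finset.sum_le_sum fun j _ =>
      complex_CS' (fun k => ψ (i,k)) (fun k => ψ (j,k))
  have hT2nn : 0 ≤ ∑ i, ∑ j, Complex.normSq (∑ a : Fin d, ψ (a,i) * ψ (a,j)) :=
    Finset.sum_nonneg fun i _ => Finset.sum_nonneg fun j _ => Complex.normSq_nonneg _
  have hT3nn : 0 ≤ ∑ i, ∑ j, Complex.normSq (S i j) :=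
    Finset.sum_nonneg fun i _ => Finset.sum_nonneg fun j _ => Complex.normSq_nonneg _
  have hκ : (2:ℝ) ≤ 1 + Real.sqrt ((d:ℝ) - 1) := by
    have h1 : (1:ℝ) ≤ (d:ℝ) - 1 := by
      have : (2:ℝ) ≤ (d:ℝ) := by exact_mod_cast hd
      linarith
    have := Real.sqrt_le_sqrt h1
    rw [Real.sqrt_one] at this
    linarith
  -- put everything together
  simp only [Finset.sum_add_distrib] at hFsum
  rw [← idN] at hFsum
  rw [hLHS, hT1, hT2, hT3, idL]
  nlinarith [mul_le_mul_of_nonneg_right hκ (add_nonneg hT2nn hT3nn), hFsum, hCS,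
    hT2nn, hT3nn]
end
end

section
/- For any orthonormal basis {e_i} of ℂ^d and any indices i, k, l, Tr(W_{λ,d}(|e_l⟩⟨e_i|)·W_{λ,d}(|e_j⟩⟨e_k|)) = [λ² + ((1-λ)/(d-1))²]δ_{i,j}δ_{k,l} + [2λ(1-λ)/(d-1) + (d-2)((1-λ)/(d-1))²]δ_{i,l}δ_{j,k} − (2λ(1-λ)/(d-1))⟨e_i|ē_k⟩⟨ē_l|e_j⟩. -/
open Matrix Finset Kronecker

noncomputable section

lemma outerLR_transpose {n : Type*} [Fintype n] (φ χ : n → ℂ) :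
    (outerLR φ χ)ᵀ = outerLR (conjVec χ) (conjVec φ) := by
  ext p q; simp [outerLR, conjVec, Matrix.transpose_apply, mul_comm]

lemma trace_outerLR {n : Type*} [Fintype n] (φ χ : n → ℂ) :
    (outerLR φ χ).trace = cinner χ φ := by
  simp [Matrix.trace, outerLR, cinner, Matrix.diag, mul_comm]

lemma trace_outerLR_mul {n : Type*} [Fintype n] (φ χ φ' χ' : n → ℂ) :
    (outerLR φ χ * outerLR φ' χ').trace = cinner χ φ' * cinner χ' φ := by
  simp only [Matrix.trace, Matrix.diag, Matrix.mul_apply, outerLR, cinner]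
  rw [Finset.sum_comm, Finset.sum_mul_sum]
  apply Finset.sum_congr rfl; intro x _
  apply Finset.sum_congr rfl; intro y _
  ring

lemma cinner_conjVec_comm {n : Type*} [Fintype n] (u v : n → ℂ) :
    cinner (conjVec u) v = cinner (conjVec v) u := by
  simp [cinner, conjVec, mul_comm]

lemma cinner_conjVec_comm' {n : Type*} [Fintype n] (u v : n → ℂ) :
    cinner u (conjVec v) = cinner v (conjVec u) := by
  simp [cinner, conjVec, mul_comm]

lemma cinner_conj_conj {n : Type*} [Fintype n] (u v : n → ℂ) :
    cinner (conjVec u) (conjVec v) = star (cinner u v) := by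
  simp [cinner, conjVec, mul_comm]

set_option maxHeartbeats 1000000 in
theorem WH_EP_trace_formula (d : ℕ) (hd : 2 ≤ d) (lam : ℝ)
    (e : Fin d → Fin d → ℂ)
    (he : ∀ i j, cinner (e i) (e j) = if i = j then 1 else 0)
    (i j k l : Fin d) :
    (WH d lam (outerLR (e l) (e i)) * WH d lam (outerLR (e j) (e k))).trace =
      ((lam ^ 2 + ((1 - lam) / ((d : ℝ) - 1)) ^ 2 : ℝ) : ℂ) *
          (if i = j then 1 else 0) * (if k = l then 1 else 0) +
        ((2 * lam * (1 - lam) / ((d : ℝ) - 1)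
            + ((d : ℝ) - 2) * ((1 - lam) / ((d : ℝ) - 1)) ^ 2 : ℝ) : ℂ) *
          (if i = l then 1 else 0) * (if j = k then 1 else 0) -
        ((2 * lam * (1 - lam) / ((d : ℝ) - 1) : ℝ) : ℂ) *
          (cinner (e i) (conjVec (e k)) * cinner (conjVec (e l)) (e j)) := by
  have hdne : d ≠ 1 := by omega
  have hd0 : ((d:ℂ) - 1) ≠ 0 := sub_ne_zero.mpr (by exact_mod_cast hdne)
  have hd0' : ((d:ℝ) - 1) ≠ 0 := sub_ne_zero.mpr (by exact_mod_cast hdne)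
  rw [WH, WH]
  rw [outerLR_transpose, outerLR_transpose, trace_outerLR, trace_outerLR]
  simp only [Matrix.add_mul, Matrix.mul_add, Matrix.smul_mul, Matrix.mul_smul,
    smul_mul_assoc, mul_smul_comm, Matrix.sub_mul, Matrix.mul_sub, Matrix.one_mul,
    Matrix.mul_one, Matrix.trace_add, Matrix.trace_sub, Matrix.trace_smul, smul_eq_mul,
    Matrix.trace_one, trace_outerLR, trace_outerLR_mul, Fintype.card_fin,
    cinner_conj_conj]
  rw [cinner_conjVec_comm' (e k) (e i), cinner_conjVec_comm (e j) (e l)]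
  simp only [he, apply_ite (star : ℂ → ℂ), star_one, star_zero]
  simp only [@eq_comm (Fin d) l i, @eq_comm (Fin d) k j, @eq_comm (Fin d) l k,
    @eq_comm (Fin d) j i]
  generalize cinner (e i) (conjVec (e k)) = X1
  generalize cinner (conjVec (e l)) (e j) = X2
  generalize (if i = j then (1:ℂ) else 0) = Dij
  generalize (if k = l then (1:ℂ) else 0) = Dkl
  generalize (if i = l then (1:ℂ) else 0) = Dil
  generalize (if j = k then (1:ℂ) else 0) = Djk
  push_cast
  simp only [div_eq_mul_inv]
  ring
end
end
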